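/- Let m₁, m₂ be coprime positive integers with α₁/α₂ = m₁/m₂, and set T = 2π·m₁/α₁. Then ∫₀ᵀ √(κ₁(t)² + κ₂(t)² + κ₃(t)²)·‖x′(t)‖ dt = 2π·√(m₁² + m₂²), where κ₁, κ₂, κ₃ are the first three Frenet curvatures of x. -/

import Mathlib

open Real intervalIntegral

/-- The curve `x(t) = (a₁ cos(α₁ t), a₁ sin(α₁ t), a₂ cos(α₂ t), a₂ sin(α₂ t))` in `ℝ⁴`. -/
noncomputable def curveX (a₁ a₂ α₁ α₂ : ℝ) : ℝ → EuclideanSpace ℝ (Fin 4) :=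
  fun t => (WithLp.equiv 2 (Fin 4 → ℝ)).symm
    ![a₁ * Real.cos (α₁ * t), a₁ * Real.sin (α₁ * t),
      a₂ * Real.cos (α₂ * t), a₂ * Real.sin (α₂ * t)]

/-- `D_j(t)`: the determinant of the `j × j` Gram matrix whose `(a,b)` entry is the inner
product of the `a`-th and `b`-th derivatives of `y` at `t` (`1 ≤ a, b ≤ j`); `D₀ = 1`. -/
noncomputable def gramDet {n : ℕ} (y : ℝ → EuclideanSpace ℝ (Fin n)) (j : ℕ) (t : ℝ) : ℝ :=
  Matrix.det (Matrix.of fun a b : Fin j =>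
    (inner ℝ (iteratedDeriv (a.val + 1) y t) (iteratedDeriv (b.val + 1) y t) : ℝ))

/-- The `j`-th Frenet curvature `κ_j(t) = √(D_{j+1} D_{j-1}) / (D_j ‖y′(t)‖)` (for `j ≥ 1`). -/
noncomputable def frenetCurvature {n : ℕ} (y : ℝ → EuclideanSpace ℝ (Fin n)) (j : ℕ) (t : ℝ) :
    ℝ :=
  Real.sqrt (gramDet y (j + 1) t * gramDet y (j - 1) t) / (gramDet y j t * ‖deriv y t‖)

/-- The Plücker coordinates `w(t)` of the exterior product of `x′(t)` and `x″(t)`. -/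
noncomputable def oscW (x : ℝ → EuclideanSpace ℝ (Fin 4)) (t : ℝ) : EuclideanSpace ℝ (Fin 6) :=
  (WithLp.equiv 2 (Fin 6 → ℝ)).symm
    ![deriv x t 0 * deriv (deriv x) t 1 - deriv x t 1 * deriv (deriv x) t 0,
      deriv x t 0 * deriv (deriv x) t 2 - deriv x t 2 * deriv (deriv x) t 0,
      deriv x t 0 * deriv (deriv x) t 3 - deriv x t 3 * deriv (deriv x) t 0,
      deriv x t 1 * deriv (deriv x) t 2 - deriv x t 2 * deriv (deriv x) t 1,
      deriv x t 1 * deriv (deriv x) t 3 - deriv x t 3 * deriv (deriv x) t 1,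
      deriv x t 2 * deriv (deriv x) t 3 - deriv x t 3 * deriv (deriv x) t 2]

/-- The osculating indicatrix `x̃(t) = w(t) / ‖w(t)‖`. -/
noncomputable def oscInd (x : ℝ → EuclideanSpace ℝ (Fin 4)) (t : ℝ) :
    EuclideanSpace ℝ (Fin 6) :=
  ‖oscW x t‖⁻¹ • oscW x t

/- ### Auxiliary lemmas -/

lemma hasDerivAt_e4 {f0 f1 f2 f3 : ℝ → ℝ} {g0 g1 g2 g3 : ℝ} {t : ℝ}
    (h0 : HasDerivAt f0 g0 t) (h1 : HasDerivAt f1 g1 t)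
    (h2 : HasDerivAt f2 g2 t) (h3 : HasDerivAt f3 g3 t) :
    HasDerivAt (fun s => (WithLp.equiv 2 (Fin 4 → ℝ)).symm ![f0 s, f1 s, f2 s, f3 s])
      ((WithLp.equiv 2 (Fin 4 → ℝ)).symm ![g0, g1, g2, g3]) t := by
  have h : HasDerivAt (fun s => ![f0 s, f1 s, f2 s, f3 s]) ![g0, g1, g2, g3] t := by
    rw [hasDerivAt_pi]
    intro i
    fin_cases i <;> simpa
  exact ((PiLp.continuousLinearEquiv 2 ℝ
    (fun _ : Fin 4 => ℝ)).symm.toContinuousLinearMap.hasFDerivAt).comp_hasDerivAt t h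

lemma hasDerivAt_acos (a c k t : ℝ) :
    HasDerivAt (fun s => a * Real.cos (c * s + k)) (a * c * -Real.sin (c * t + k)) t := by
  have h : HasDerivAt (fun s : ℝ => c * s + k) (c * 1) t :=
    (((hasDerivAt_id t).const_mul c).add_const k)
  have := ((Real.hasDerivAt_cos (c * t + k)).comp t h).const_mul a
  refine this.congr_deriv ?_; ring

lemma hasDerivAt_asin (a c k t : ℝ) :
    HasDerivAt (fun s => a * Real.sin (c * s + k)) (a * c * Real.cos (c * t + k)) t := by
  have h : HasDerivAt (fun s : ℝ => c * s + k) (c * 1) t :=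
    (((hasDerivAt_id t).const_mul c).add_const k)
  have := ((Real.hasDerivAt_sin (c * t + k)).comp t h).const_mul a
  refine this.congr_deriv ?_; ring

lemma curveX_iteratedDeriv (a₁ a₂ α₁ α₂ : ℝ) (n : ℕ) (t : ℝ) :
    iteratedDeriv n (curveX a₁ a₂ α₁ α₂) t = (WithLp.equiv 2 (Fin 4 → ℝ)).symm
      ![a₁ * α₁ ^ n * Real.cos (α₁ * t + n * (π / 2)),
        a₁ * α₁ ^ n * Real.sin (α₁ * t + n * (π / 2)),
        a₂ * α₂ ^ n * Real.cos (α₂ * t + n * (π / 2)),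
        a₂ * α₂ ^ n * Real.sin (α₂ * t + n * (π / 2))] := by
  induction n generalizing t with
  | zero => simp [curveX]
  | succ n ih =>
    rw [iteratedDeriv_succ]
    have hfun : iteratedDeriv n (curveX a₁ a₂ α₁ α₂) = fun s =>
        (WithLp.equiv 2 (Fin 4 → ℝ)).symm
          ![a₁ * α₁ ^ n * Real.cos (α₁ * s + n * (π / 2)),
            a₁ * α₁ ^ n * Real.sin (α₁ * s + n * (π / 2)),
            a₂ * α₂ ^ n * Real.cos (α₂ * s + n * (π / 2)),
            a₂ * α₂ ^ n * Real.sin (α₂ * s + n * (π / 2))] := funext ih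
    rw [hfun]
    have h := hasDerivAt_e4 (hasDerivAt_acos (a₁ * α₁ ^ n) α₁ (n * (π / 2)) t)
      (hasDerivAt_asin (a₁ * α₁ ^ n) α₁ (n * (π / 2)) t)
      (hasDerivAt_acos (a₂ * α₂ ^ n) α₂ (n * (π / 2)) t)
      (hasDerivAt_asin (a₂ * α₂ ^ n) α₂ (n * (π / 2)) t)
    rw [h.deriv]
    congr 1
    have e1 : ∀ α s : ℝ, α * s + (n + 1 : ℕ) * (π / 2) = (α * s + n * (π / 2)) + π / 2 := by
      intro α s; push_cast; ring
    funext i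
    fin_cases i <;>
      simp only [Matrix.cons_val_zero, Matrix.cons_val_one, Matrix.head_cons,
        Matrix.cons_val_two, Matrix.tail_cons, Matrix.cons_val_three, e1,
        Real.cos_add_pi_div_two, Real.sin_add_pi_div_two, pow_succ] <;> ring

lemma curveX_inner (a₁ a₂ α₁ α₂ : ℝ) (a b : ℕ) (t : ℝ) :
    (inner ℝ (iteratedDeriv a (curveX a₁ a₂ α₁ α₂) t) (iteratedDeriv b (curveX a₁ a₂ α₁ α₂) t) : ℝ)
      = (a₁ ^ 2 * α₁ ^ (a + b) + a₂ ^ 2 * α₂ ^ (a + b)) * Real.cos (((a : ℝ) - b) * (π / 2)) := by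
  rw [curveX_iteratedDeriv, curveX_iteratedDeriv]
  rw [PiLp.inner_apply]
  simp only [WithLp.equiv_symm_apply, WithLp.ofLp_toLp, RCLike.inner_apply, starRingEnd_apply, star_trivial,
    Fin.sum_univ_four, Matrix.cons_val_zero, Matrix.cons_val_one, Matrix.head_cons,
    Matrix.cons_val_two, Matrix.tail_cons, Matrix.cons_val_three]
  have h1 : Real.cos (α₁ * t + a * (π / 2)) * Real.cos (α₁ * t + b * (π / 2))
      + Real.sin (α₁ * t + a * (π / 2)) * Real.sin (α₁ * t + b * (π / 2))
      = Real.cos (((a : ℝ) - b) * (π / 2)) := by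
    rw [← Real.cos_sub]; ring_nf
  have h2 : Real.cos (α₂ * t + a * (π / 2)) * Real.cos (α₂ * t + b * (π / 2))
      + Real.sin (α₂ * t + a * (π / 2)) * Real.sin (α₂ * t + b * (π / 2))
      = Real.cos (((a : ℝ) - b) * (π / 2)) := by
    rw [← Real.cos_sub]; ring_nf
  rw [pow_add, pow_add]
  linear_combination (a₁ ^ 2 * α₁ ^ a * α₁ ^ b) * h1 + (a₂ ^ 2 * α₂ ^ a * α₂ ^ b) * h2

lemma cos_two_halves : Real.cos (2 * (π / 2)) = -1 := by
  have h : (2 : ℝ) * (π / 2) = π := by ring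
  rw [h, Real.cos_pi]

lemma cos_three_halves : Real.cos (3 * (π / 2)) = 0 := by
  have : (3 : ℝ) * (π / 2) = π + π / 2 := by ring
  rw [this, Real.cos_add]; simp

lemma gram0 (a₁ a₂ α₁ α₂ t : ℝ) : gramDet (curveX a₁ a₂ α₁ α₂) 0 t = 1 := by
  simp [gramDet]

lemma gram1 (a₁ a₂ α₁ α₂ t : ℝ) : gramDet (curveX a₁ a₂ α₁ α₂) 1 t
    = a₁ ^ 2 * α₁ ^ 2 + a₂ ^ 2 * α₂ ^ 2 := by
  simp only [gramDet, Matrix.det_fin_one, Matrix.of_apply, curveX_inner]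
  norm_num

lemma gram2 (a₁ a₂ α₁ α₂ t : ℝ) : gramDet (curveX a₁ a₂ α₁ α₂) 2 t
    = (a₁ ^ 2 * α₁ ^ 2 + a₂ ^ 2 * α₂ ^ 2) * (a₁ ^ 2 * α₁ ^ 4 + a₂ ^ 2 * α₂ ^ 4) := by
  simp only [gramDet, Matrix.det_fin_two, Matrix.of_apply, curveX_inner]
  norm_num

lemma gram3 (a₁ a₂ α₁ α₂ t : ℝ) : gramDet (curveX a₁ a₂ α₁ α₂) 3 t
    = (a₁ ^ 2 * α₁ ^ 4 + a₂ ^ 2 * α₂ ^ 4) *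
      ((a₁ ^ 2 * α₁ ^ 2 + a₂ ^ 2 * α₂ ^ 2) * (a₁ ^ 2 * α₁ ^ 6 + a₂ ^ 2 * α₂ ^ 6)
        - (a₁ ^ 2 * α₁ ^ 4 + a₂ ^ 2 * α₂ ^ 4) ^ 2) := by
  simp only [gramDet, Matrix.det_fin_three, Matrix.of_apply, curveX_inner]
  norm_num [cos_two_halves, cos_three_halves]
  ring

lemma det4_aux (p q r s : ℝ) :
    (!![p, 0, -q, 0; 0, q, 0, -r; -q, 0, r, 0; 0, -r, 0, s]).det
      = (p * r - q ^ 2) * (q * s - r ^ 2) := by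
  simp [Matrix.det_succ_row_zero, Fin.sum_univ_succ, Fin.succAbove]
  ring

set_option maxHeartbeats 1600000 in
lemma gram4 (a₁ a₂ α₁ α₂ t : ℝ) : gramDet (curveX a₁ a₂ α₁ α₂) 4 t
    = ((a₁ ^ 2 * α₁ ^ 2 + a₂ ^ 2 * α₂ ^ 2) * (a₁ ^ 2 * α₁ ^ 6 + a₂ ^ 2 * α₂ ^ 6)
        - (a₁ ^ 2 * α₁ ^ 4 + a₂ ^ 2 * α₂ ^ 4) ^ 2) *
      ((a₁ ^ 2 * α₁ ^ 4 + a₂ ^ 2 * α₂ ^ 4) * (a₁ ^ 2 * α₁ ^ 8 + a₂ ^ 2 * α₂ ^ 8)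
        - (a₁ ^ 2 * α₁ ^ 6 + a₂ ^ 2 * α₂ ^ 6) ^ 2) := by
  have hM : (Matrix.of fun a b : Fin 4 =>
      (inner ℝ (iteratedDeriv (a.val + 1) (curveX a₁ a₂ α₁ α₂) t)
        (iteratedDeriv (b.val + 1) (curveX a₁ a₂ α₁ α₂) t) : ℝ))
      = !![a₁ ^ 2 * α₁ ^ 2 + a₂ ^ 2 * α₂ ^ 2, 0, -(a₁ ^ 2 * α₁ ^ 4 + a₂ ^ 2 * α₂ ^ 4), 0;
           0, a₁ ^ 2 * α₁ ^ 4 + a₂ ^ 2 * α₂ ^ 4, 0, -(a₁ ^ 2 * α₁ ^ 6 + a₂ ^ 2 * α₂ ^ 6);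
           -(a₁ ^ 2 * α₁ ^ 4 + a₂ ^ 2 * α₂ ^ 4), 0, a₁ ^ 2 * α₁ ^ 6 + a₂ ^ 2 * α₂ ^ 6, 0;
           0, -(a₁ ^ 2 * α₁ ^ 6 + a₂ ^ 2 * α₂ ^ 6), 0, a₁ ^ 2 * α₁ ^ 8 + a₂ ^ 2 * α₂ ^ 8] := by
    ext a b
    fin_cases a <;> fin_cases b <;>
      simp only [Matrix.of_apply, curveX_inner] <;>
      norm_num [cos_two_halves, cos_three_halves]
  have h4 := det4_aux (a₁ ^ 2 * α₁ ^ 2 + a₂ ^ 2 * α₂ ^ 2) (a₁ ^ 2 * α₁ ^ 4 + a₂ ^ 2 * α₂ ^ 4)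
    (a₁ ^ 2 * α₁ ^ 6 + a₂ ^ 2 * α₂ ^ 6) (a₁ ^ 2 * α₁ ^ 8 + a₂ ^ 2 * α₂ ^ 8)
  simp only [gramDet, hM, h4]

lemma norm_deriv_curveX (a₁ a₂ α₁ α₂ t : ℝ) :
    ‖deriv (curveX a₁ a₂ α₁ α₂) t‖ = Real.sqrt (a₁ ^ 2 * α₁ ^ 2 + a₂ ^ 2 * α₂ ^ 2) := by
  rw [@norm_eq_sqrt_real_inner, ← iteratedDeriv_one, curveX_inner]
  norm_num

theorem stmt8 (a₁ a₂ α₁ α₂ : ℝ) (ha₁ : 0 < a₁) (ha₂ : 0 < a₂)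
    (hα₁ : 0 < α₁) (hα₂ : 0 < α₂) (hne : α₁ ≠ α₂)
    (m₁ m₂ : ℕ) (hm₁ : 0 < m₁) (hm₂ : 0 < m₂) (hcop : Nat.Coprime m₁ m₂)
    (hratio : α₁ / α₂ = (m₁ : ℝ) / (m₂ : ℝ)) (T : ℝ) (hT : T = 2 * Real.pi * m₁ / α₁) :
    (∫ t in (0:ℝ)..T,
      Real.sqrt (frenetCurvature (curveX a₁ a₂ α₁ α₂) 1 t ^ 2 + frenetCurvature (curveX a₁ a₂ α₁ α₂) 2 t ^ 2
        + frenetCurvature (curveX a₁ a₂ α₁ α₂) 3 t ^ 2) * ‖deriv (curveX a₁ a₂ α₁ α₂) t‖) = 2 * Real.pi * Real.sqrt ((m₁ : ℝ) ^ 2 + (m₂ : ℝ) ^ 2) := by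
  set S2 := a₁ ^ 2 * α₁ ^ 2 + a₂ ^ 2 * α₂ ^ 2 with hS2def
  set S4 := a₁ ^ 2 * α₁ ^ 4 + a₂ ^ 2 * α₂ ^ 4 with hS4def
  set S6 := a₁ ^ 2 * α₁ ^ 6 + a₂ ^ 2 * α₂ ^ 6 with hS6def
  set S8 := a₁ ^ 2 * α₁ ^ 8 + a₂ ^ 2 * α₂ ^ 8 with hS8def
  have hS2 : 0 < S2 := by rw [hS2def]; positivity
  have hS4 : 0 < S4 := by rw [hS4def]; positivity
  have hd : α₁ ^ 2 - α₂ ^ 2 ≠ 0 := by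
    intro h
    apply hne
    nlinarith
  have hA : S2 * S6 - S4 ^ 2 = a₁ ^ 2 * a₂ ^ 2 * α₁ ^ 2 * α₂ ^ 2 * (α₁ ^ 2 - α₂ ^ 2) ^ 2 := by
    rw [hS2def, hS4def, hS6def]; ring
  have hB : S4 * S8 - S6 ^ 2 = a₁ ^ 2 * a₂ ^ 2 * α₁ ^ 4 * α₂ ^ 4 * (α₁ ^ 2 - α₂ ^ 2) ^ 2 := by
    rw [hS4def, hS6def, hS8def]; ring
  have hApos : 0 < S2 * S6 - S4 ^ 2 := by
    rw [hA]; positivity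
  have hBpos : 0 < S4 * S8 - S6 ^ 2 := by
    rw [hB]; positivity
  have hint : ∀ t : ℝ,
      Real.sqrt (frenetCurvature (curveX a₁ a₂ α₁ α₂) 1 t ^ 2
        + frenetCurvature (curveX a₁ a₂ α₁ α₂) 2 t ^ 2
        + frenetCurvature (curveX a₁ a₂ α₁ α₂) 3 t ^ 2) * ‖deriv (curveX a₁ a₂ α₁ α₂) t‖
      = Real.sqrt (α₁ ^ 2 + α₂ ^ 2) := by
    intro t
    have k1 : frenetCurvature (curveX a₁ a₂ α₁ α₂) 1 t
        = Real.sqrt (gramDet (curveX a₁ a₂ α₁ α₂) 2 t * gramDet (curveX a₁ a₂ α₁ α₂) 0 t)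
          / (gramDet (curveX a₁ a₂ α₁ α₂) 1 t * ‖deriv (curveX a₁ a₂ α₁ α₂) t‖) := rfl
    have k2 : frenetCurvature (curveX a₁ a₂ α₁ α₂) 2 t
        = Real.sqrt (gramDet (curveX a₁ a₂ α₁ α₂) 3 t * gramDet (curveX a₁ a₂ α₁ α₂) 1 t)
          / (gramDet (curveX a₁ a₂ α₁ α₂) 2 t * ‖deriv (curveX a₁ a₂ α₁ α₂) t‖) := rfl
    have k3 : frenetCurvature (curveX a₁ a₂ α₁ α₂) 3 t
        = Real.sqrt (gramDet (curveX a₁ a₂ α₁ α₂) 4 t * gramDet (curveX a₁ a₂ α₁ α₂) 2 t)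
          / (gramDet (curveX a₁ a₂ α₁ α₂) 3 t * ‖deriv (curveX a₁ a₂ α₁ α₂) t‖) := rfl
    rw [k1, k2, k3, gram0, gram1, gram2, gram3, gram4, norm_deriv_curveX]
    rw [← hS2def, ← hS4def, ← hS6def, ← hS8def]
    have hnorm2 : Real.sqrt S2 ^ 2 = S2 := Real.sq_sqrt hS2.le
    have e1 : (Real.sqrt (S2 * S4 * 1) / (S2 * Real.sqrt S2)) ^ 2
        = S2 * S4 / (S2 ^ 2 * S2) := by
      rw [div_pow, mul_pow, hnorm2, Real.sq_sqrt (by positivity), mul_one]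
    have e2 : (Real.sqrt (S4 * (S2 * S6 - S4 ^ 2) * S2) / (S2 * S4 * Real.sqrt S2)) ^ 2
        = S4 * (S2 * S6 - S4 ^ 2) * S2 / ((S2 * S4) ^ 2 * S2) := by
      rw [div_pow, mul_pow, hnorm2, Real.sq_sqrt (by positivity)]
    have e3 : (Real.sqrt ((S2 * S6 - S4 ^ 2) * (S4 * S8 - S6 ^ 2) * (S2 * S4))
          / (S4 * (S2 * S6 - S4 ^ 2) * Real.sqrt S2)) ^ 2
        = (S2 * S6 - S4 ^ 2) * (S4 * S8 - S6 ^ 2) * (S2 * S4)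
          / ((S4 * (S2 * S6 - S4 ^ 2)) ^ 2 * S2) := by
      rw [div_pow, mul_pow, hnorm2, Real.sq_sqrt (by positivity)]
    rw [e1, e2, e3]
    have hsum : S2 * S4 / (S2 ^ 2 * S2)
        + S4 * (S2 * S6 - S4 ^ 2) * S2 / ((S2 * S4) ^ 2 * S2)
        + (S2 * S6 - S4 ^ 2) * (S4 * S8 - S6 ^ 2) * (S2 * S4)
          / ((S4 * (S2 * S6 - S4 ^ 2)) ^ 2 * S2)
        = (α₁ ^ 2 + α₂ ^ 2) / S2 := by
      rw [div_add_div _ _ (by positivity) (by positivity),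
        div_add_div _ _ (by positivity) (by positivity),
        div_eq_div_iff (by positivity) (by positivity)]
      rw [hS2def, hS4def, hS6def, hS8def]
      ring
    rw [hsum, div_eq_mul_inv, Real.sqrt_mul (by positivity),
      Real.sqrt_inv, mul_assoc, inv_mul_cancel₀ (by positivity), mul_one]
  simp only [hint]
  rw [intervalIntegral.integral_const, smul_eq_mul, sub_zero, hT]
  have hm₁' : (0 : ℝ) < m₁ := by exact_mod_cast hm₁
  have hm₂' : (0 : ℝ) < m₂ := by exact_mod_cast hm₂
  have hratio' : α₁ * m₂ = m₁ * α₂ := by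
    field_simp at hratio
    linarith [hratio]
  have hkey : α₁ ^ 2 + α₂ ^ 2 = (α₁ / m₁) ^ 2 * ((m₁ : ℝ) ^ 2 + (m₂ : ℝ) ^ 2) := by
    field_simp
    linear_combination (-(α₁ * (m₂ : ℝ) + (m₁ : ℝ) * α₂)) * hratio'
  rw [hkey, Real.sqrt_mul (by positivity), Real.sqrt_sq (by positivity)]
  field_simp
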